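/- Let ρ be a density operator on H₁ ⊗ ⋯ ⊗ H_n (finite dimensional), and for each party i let {E^{(i)}_{k}} be observables with ‖E^{(i)}_k‖ ≤ 1. Suppose a Bell functional S(ρ) = Σ_s Σ_{i₁≠⋯≠i_s} Σ_{k₁,…,k_s} ψ^{(i₁⋯i_s)}_{k₁⋯k_s} ⟨E^{(i₁)}_{k₁}⋯E^{(i_s)}_{k_s}⟩_ρ satisfies the bound S ≤ Δ whenever each correlator ⟨E^{(i₁)}_{k₁}⋯E^{(i_s)}_{k_s}⟩ is replaced by the factorized expression ⟨E^{(i₁)}_{k₁}⟩⋯⟨E^{(i_{s−2})}_{k_{s−2}}⟩⟨E^{(i_{s−1})}_{k_{s−1}}E^{(i_s)}_{k_s}⟩. If additionally |⟨E^{(i₁)}_{k₁}⋯E^{(i_s)}_{k_s}⟩ − ⟨E^{(i₁)}_{k₁}⟩⋯⟨E^{(i_{s−2})}_{k_{s−2}}⟩⟨E^{(i_{s−1})}_{k_{s−1}}E^{(i_s)}_{k_s}⟩| ≤ (s−2)δ for all terms, then S(ρ) ≤ Δ + γδ where γ = Σ (s−2)|ψ^{(i₁⋯i_s)}_{k₁⋯k_s}|.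 -/

import Mathlib

/-- Core estimate of Theorem 2: a linear Bell expression `S = Σ_t ψ t · F t` whose
factorized version `Σ_t ψ t · G t` is bounded by the biseparable bound `Δ`, and whose
terms satisfy the clustering estimate `|F t − G t| ≤ (s t − 2)·δ` (where `s t` is the
number of parties in term `t`), satisfies `S ≤ Δ + γ·δ` with
`γ = Σ_t (s t − 2)·|ψ t|`. -/
theorem stmt_4 {ι : Type*} [Fintype ι] (ψ F G : ι → ℝ) (s : ι → ℕ) (δ Δ : ℝ)
    (hδ : 0 < δ)
    (hF : ∀ t, |F t| ≤ 1) (hG : ∀ t, |G t| ≤ 1)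
    (hfact : ∑ t, ψ t * G t ≤ Δ)
    (hcl : ∀ t, |F t - G t| ≤ ((s t - 2 : ℕ) : ℝ) * δ) :
    ∑ t, ψ t * F t ≤ Δ + (∑ t, ((s t - 2 : ℕ) : ℝ) * |ψ t|) * δ := by
  have key : ∑ t, ψ t * F t ≤ ∑ t, ψ t * G t + ∑ t, ((s t - 2 : ℕ) : ℝ) * |ψ t| * δ := by
    rw [← Finset.sum_add_distrib]
    apply Finset.sum_le_sum
    intro t _
    have h1 : ψ t * F t - ψ t * G t ≤ |ψ t * (F t - G t)| := by
      rw [← mul_sub]; exact le_abs_self _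
    have h2 : |ψ t * (F t - G t)| = |ψ t| * |F t - G t| := abs_mul _ _
    have h3 : |ψ t| * |F t - G t| ≤ |ψ t| * (((s t - 2 : ℕ) : ℝ) * δ) :=
      mul_le_mul_of_nonneg_left (hcl t) (abs_nonneg _)
    nlinarith [abs_nonneg (ψ t)]
  calc ∑ t, ψ t * F t ≤ ∑ t, ψ t * G t + ∑ t, ((s t - 2 : ℕ) : ℝ) * |ψ t| * δ := key
    _ ≤ Δ + (∑ t, ((s t - 2 : ℕ) : ℝ) * |ψ t|) * δ := by
        rw [Finset.sum_mul]; exact add_le_add_left hfact _
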